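/- Let S = (β, γ) ∈ Sy(n,k,r) with k ≥ 2, let z ∈ β and z′ ∈ γ, and suppose that either z = z′, or z < z′ with z ∉ γ, z′ ∉ β, and z, z′ consecutive in Z(S) (no element of Z(S) lies strictly between z and z′). Then S is standard if and only if the symbol S′ = (β ∖ {z}, γ ∖ {z′}) ∈ Sy(n, k−1, r) is standard. -/

import Mathlib

namespace LM2003

open scoped BigOperators

/-- `(β, γ)` is a symbol in `Sy(n,k,r)`: two finite sets of integers contained in
`{1, …, n+1}`, of cardinalities `k+r` and `k` (rows are identified with the subsets
they enumerate; strict increase is automatic). -/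
def IsSymbol (n k r : ℕ) (β γ : Finset ℤ) : Prop :=
  β ⊆ Finset.Icc 1 ((n : ℤ) + 1) ∧ γ ⊆ Finset.Icc 1 ((n : ℤ) + 1) ∧
    β.card = k + r ∧ γ.card = k

/-- `(β,γ)` is standard: for each `i < |γ|`, the `i`-th smallest element of `β`
is `≤` the `i`-th smallest element of `γ`. -/
def IsStandard (β γ : Finset ℤ) : Prop :=
  ∀ i : ℕ, i < γ.card → (β.sort (· ≤ ·))[i]! ≤ (γ.sort (· ≤ ·))[i]!

/-- Accumulated data after level `l` of the recursive definition of `ψ`: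
the first component is `γ⁰ ∪ ⋯ ∪ γ^l` and the second is `ψ(γ⁰ ∪ ⋯ ∪ γ^l)`. -/
def psiAcc (β γ : Finset ℤ) : ℕ → Finset ℤ × Finset ℤ
  | 0 => (γ ∩ β, γ ∩ β)
  | l + 1 =>
    let p := psiAcc β γ l
    let g := (γ \ p.1).filter fun j => j - ((l : ℤ) + 1) ∈ β \ p.2
    (p.1 ∪ g, p.2 ∪ g.image fun j => j - ((l : ℤ) + 1))

/-- The level sets `γ^l` in the recursive definition of `ψ`. -/
def gammaL (β γ : Finset ℤ) : ℕ → Finset ℤ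
  | 0 => γ ∩ β
  | l + 1 =>
    (γ \ (psiAcc β γ l).1).filter fun j => j - ((l : ℤ) + 1) ∈ β \ (psiAcc β γ l).2

open Classical in
/-- The map `ψ` : for `j ∈ γ^l` it is `j ↦ j - l` (via the least such `l`),
and the identity elsewhere. -/
noncomputable def psiS (β γ : Finset ℤ) (j : ℤ) : ℤ :=
  if h : ∃ l, j ∈ gammaL β γ l then j - (Nat.find h : ℤ) else j

/-- The pairs of a (standard) symbol: the pairs `(j, ψ(j))` with `j ∈ γ` and `ψ(j) ≠ j`. -/
noncomputable def pairsS (β γ : Finset ℤ) : Finset (ℤ × ℤ) :=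
  (γ.filter fun j => psiS β γ j ≠ j).image fun j => (j, psiS β γ j)

/-- Exchanging, for every pair in `T`, the two members between the two rows of `(β,γ)`
(reordering of rows is automatic for sets). Pairs are written `(j, ψ j)` with `j` in the
bottom row `γ` and `ψ j` in the top row `β`. -/
def swapSymbol (β γ : Finset ℤ) (T : Finset (ℤ × ℤ)) : Finset ℤ × Finset ℤ :=
  ((β \ T.image Prod.snd) ∪ T.image Prod.fst,
   (γ \ T.image Prod.fst) ∪ T.image Prod.snd)

/-- The class `C(S)` of a standard symbol: all symbols obtained by permuting a subset
of its pairs. -/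
noncomputable def CSet (β γ : Finset ℤ) : Finset (Finset ℤ × Finset ℤ) :=
  (pairsS β γ).powerset.image (swapSymbol β γ)

/-- The Fock space `F(Λ)`: free `ℚ(v)`-module on the set of all symbols. -/
abbrev FF : Type := (Finset ℤ × Finset ℤ) →₀ RatFunc ℚ

/-- Standard basis vector `u_S`. -/
noncomputable def uS (S : Finset ℤ × Finset ℤ) : FF := Finsupp.single S 1

/-- The variable `v` of `K = ℚ(v)`. -/
noncomputable def vv : RatFunc ℚ := RatFunc.X

/-- Action of the Chevalley generator `f_j` on the standard basis vector `u_S`. -/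
noncomputable def fAct (j : ℤ) (S : Finset ℤ × Finset ℤ) : FF :=
  (if j ∈ S.2 ∧ j + 1 ∉ S.2 then uS (S.1, insert (j + 1) (S.2.erase j)) else 0) +
  (if j ∈ S.1 ∧ j + 1 ∉ S.1 then
      vv ^ ((if j ∈ S.2 then (1 : ℤ) else 0) - (if j + 1 ∈ S.2 then (1 : ℤ) else 0)) •
        uS (insert (j + 1) (S.1.erase j), S.2)
    else 0)

/-- The Chevalley generator `f_j` as a linear operator on `F`. -/
noncomputable def fLin (j : ℤ) : FF →ₗ[RatFunc ℚ] FF :=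
  Finsupp.lsum (RatFunc ℚ) fun S => LinearMap.toSpanSingleton (RatFunc ℚ) FF (fAct j S)

/-- Divided powers: `f_j^{(1)} = f_j`, `f_j^{(2)} = f_j² / (v + v⁻¹)`. -/
noncomputable def fDiv (j : ℤ) (m : ℕ) : FF →ₗ[RatFunc ℚ] FF :=
  if m = 2 then (vv + vv⁻¹)⁻¹ • (fLin j ∘ₗ fLin j) else fLin j

/-- `b_S = Σ_{Σ ∈ C(S)} v^{n(Σ)} u_Σ`, written as a sum over the subsets `T` of the
set of pairs of `S` (with `n(Σ) = |T|`). -/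
noncomputable def bS (β γ : Finset ℤ) : FF :=
  ∑ T ∈ (pairsS β γ).powerset, vv ^ T.card • uS (swapSymbol β γ T)

/-- `ι` is an involution of the finite set `Z`. -/
def IsInvolutionOn (Z : Finset ℤ) (ι : ℤ → ℤ) : Prop :=
  (∀ z ∈ Z, ι z ∈ Z) ∧ ∀ z ∈ Z, ι (ι z) = z

/-- `z < z'` are consecutive elements of `Z`. -/
def ConsecutiveIn (Z : Finset ℤ) (z z' : ℤ) : Prop :=
  z ∈ Z ∧ z' ∈ Z ∧ z < z' ∧ ∀ x ∈ Z, ¬(z < x ∧ x < z')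

/-- `r`-admissible involutions of a finite set `Z` of integers: `ι` is an involution of
`Z` with exactly `r` fixed points, and either `|Z| = r`, or there are two consecutive
elements `z < z'` of `Z` with `ι z = z'` whose removal again yields an `r`-admissible
involution. -/
inductive IsAdmissible (r : ℕ) : Finset ℤ → (ℤ → ℤ) → Prop
  | base (Z : Finset ℤ) (ι : ℤ → ℤ) (hinv : IsInvolutionOn Z ι)
      (hfix : (Z.filter fun z => ι z = z).card = r) (hcard : Z.card = r) :
      IsAdmissible r Z ι
  | step (Z : Finset ℤ) (ι : ℤ → ℤ) (z z' : ℤ) (hinv : IsInvolutionOn Z ι)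
      (hfix : (Z.filter fun w => ι w = w).card = r)
      (hcons : ConsecutiveIn Z z z') (hzz : ι z = z')
      (hrec : IsAdmissible r (Z \ {z, z'}) ι) :
      IsAdmissible r Z ι

/-- `c_j(S)`: number of occurrences of `j` among the entries of the symbol `(β,γ)`. -/
def contentS (β γ : Finset ℤ) (j : ℤ) : ℕ :=
  (if j ∈ β then 1 else 0) + (if j ∈ γ then 1 else 0)


lemma sorted_mono (l : List ℤ) (hs : l.Pairwise (· ≤ ·)) {i j : ℕ} (hij : i ≤ j)
    (hj : j < l.length) : l[i] ≤ l[j] := by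
  rcases Nat.eq_or_lt_of_le hij with rfl | h
  · exact le_refl _
  · exact List.pairwise_iff_getElem.mp hs i j (lt_trans h hj) hj h

lemma list_lem (l : List ℤ) (hs : l.Pairwise (· ≤ ·)) (t : ℤ) (i : ℕ) (hi : i < l.length) :
    l[i] ≤ t ↔ i < l.countP (fun x => decide (x ≤ t)) := by
  constructor
  · intro h
    have h1 : l = l.take (i+1) ++ l.drop (i+1) := (List.take_append_drop _ _).symm
    rw [h1, List.countP_append]
    have : (l.take (i+1)).countP (fun x => decide (x ≤ t)) = (l.take (i+1)).length := by
      rw [List.countP_eq_length]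
      intro a ha
      obtain ⟨j, hj, rfl⟩ := List.mem_iff_getElem.mp ha
      simp only [List.length_take] at hj
      rw [List.getElem_take]
      simp only [decide_eq_true_eq]
      exact le_trans (sorted_mono l hs (by omega) hi) h
    rw [this, List.length_take]
    omega
  · intro h
    by_contra hc
    push_neg at hc
    have h1 : l = l.take i ++ l.drop i := (List.take_append_drop _ _).symm
    have h2 : (l.drop i).countP (fun x => decide (x ≤ t)) = 0 := by
      rw [List.countP_eq_zero]
      intro a ha
      obtain ⟨j, hj, rfl⟩ := List.mem_iff_getElem.mp ha
      simp only [List.length_drop] at hj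
      rw [List.getElem_drop]
      simp only [decide_eq_true_eq, not_le]
      exact lt_of_lt_of_le hc (sorted_mono l hs (by omega) (by omega))
    rw [h1, List.countP_append, h2] at h
    have := List.countP_le_length (l := l.take i) (p := fun x => decide (x ≤ t))
    simp only [List.length_take] at this
    omega

lemma count_iff (s : Finset ℤ) (t : ℤ) (i : ℕ) (hi : i < s.card) :
    (s.sort (· ≤ ·))[i]! ≤ t ↔ i < (s.filter (· ≤ t)).card := by
  have hlen : (s.sort (· ≤ ·)).length = s.card := Finset.length_sort _
  have hi' : i < (s.sort (· ≤ ·)).length := by omega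
  rw [getElem!_pos (Finset.sort s (· ≤ ·)) i hi']
  have hcard : (s.filter (· ≤ t)).card = (s.sort (· ≤ ·)).countP (fun x => decide (x ≤ t)) := by
    have h0 : ((s.sort (· ≤ ·)) : Multiset ℤ) = s.val := Finset.sort_eq _ _
    have : (s.filter (· ≤ t)).card = Multiset.countP (fun x => decide (x ≤ t)) s.val := by
      simp [Finset.filter, Finset.card, Multiset.countP_eq_card_filter]
    rw [this, ← h0, Multiset.coe_countP]
    simp
  rw [hcard]
  exact list_lem _ (Finset.pairwise_sort _ _) t i hi'

lemma standard_iff (β γ : Finset ℤ) (hcard : γ.card ≤ β.card) :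
    IsStandard β γ ↔ ∀ t : ℤ, (γ.filter (· ≤ t)).card ≤ (β.filter (· ≤ t)).card := by
  constructor
  · intro hst t
    set j := (γ.filter (· ≤ t)).card with hj
    rcases Nat.eq_zero_or_pos j with h0 | h0
    · omega
    · have hjle : j ≤ γ.card := Finset.card_filter_le _ _
      have hj1 : j - 1 < γ.card := by omega
      have hcle : (γ.sort (· ≤ ·))[j-1]! ≤ t := (count_iff γ t (j-1) hj1).mpr (by omega)
      have hble : (β.sort (· ≤ ·))[j-1]! ≤ t := le_trans (hst (j-1) hj1) hcle
      have := (count_iff β t (j-1) (lt_of_lt_of_le hj1 hcard)).mp hble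
      omega
  · intro h i hi
    have h1 : i < (γ.filter (· ≤ (γ.sort (· ≤ ·))[i]!)).card :=
      (count_iff γ _ i hi).mp (le_refl _)
    have h2 : i < (β.filter (· ≤ (γ.sort (· ≤ ·))[i]!)).card := lt_of_lt_of_le h1 (h _)
    exact (count_iff β _ i (lt_of_lt_of_le hi hcard)).mpr h2

lemma erase_filter_card_le (s : Finset ℤ) (a : ℤ) (ha : a ∈ s) (t : ℤ) (hat : a ≤ t) :
    ((s.erase a).filter (· ≤ t)).card + 1 = (s.filter (· ≤ t)).card := by
  rw [Finset.filter_erase]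
  rw [Finset.card_erase_of_mem (a := a) (s := s.filter (· ≤ t)) (Finset.mem_filter.mpr ⟨ha, hat⟩)]
  have : 1 ≤ (s.filter (· ≤ t)).card :=
    Finset.card_pos.mpr ⟨a, Finset.mem_filter.mpr ⟨ha, hat⟩⟩
  omega

lemma erase_filter_card_gt (s : Finset ℤ) (a : ℤ) (t : ℤ) (hat : ¬ a ≤ t) :
    ((s.erase a).filter (· ≤ t)).card = (s.filter (· ≤ t)).card := by
  rw [Finset.filter_erase, Finset.erase_eq_of_notMem]
  intro hmem
  exact hat (Finset.mem_filter.mp hmem).2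

lemma split_card (s : Finset ℤ) (z t : ℤ) (h : z ≤ t) :
    (s.filter (· ≤ t)).card
      = (s.filter (· ≤ z)).card + (s.filter (fun x => z < x ∧ x ≤ t)).card := by
  rw [← Finset.card_union_of_disjoint]
  · congr 1
    ext x
    simp only [Finset.mem_union, Finset.mem_filter]
    constructor
    · rintro ⟨hx, hxt⟩
      rcases le_or_gt x z with h1 | h1
      · exact Or.inl ⟨hx, h1⟩
      · exact Or.inr ⟨hx, h1, hxt⟩
    · rintro (⟨hx, h1⟩ | ⟨hx, h1, h2⟩)
      · exact ⟨hx, le_trans h1 h⟩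
      · exact ⟨hx, h2⟩
  · rw [Finset.disjoint_left]
    intro x hx hy
    have h1 := (Finset.mem_filter.mp hx).2
    have h2 := (Finset.mem_filter.mp hy).2.1
    omega

lemma middle_lt (β γ : Finset ℤ) (z z' t : ℤ) (hzβ : z ∈ β) (hzγ : z ∉ γ)
    (hz'β : z' ∉ β)
    (hbet : ∀ x ∈ (β ∪ γ) \ (β ∩ γ), ¬(z < x ∧ x < z'))
    (hprev : (γ.filter (· ≤ z - 1)).card ≤ (β.filter (· ≤ z - 1)).card)
    (h2 : z ≤ t) (h1 : t < z') :
    (γ.filter (· ≤ t)).card + 1 ≤ (β.filter (· ≤ t)).card := by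
  rw [split_card γ z t h2, split_card β z t h2]
  have hA : γ.filter (fun x => z < x ∧ x ≤ t) = β.filter (fun x => z < x ∧ x ≤ t) := by
    ext x
    simp only [Finset.mem_filter]
    constructor
    · rintro ⟨hxγ, hx1, hx2⟩
      refine ⟨?_, hx1, hx2⟩
      by_contra hxβ
      exact hbet x (Finset.mem_sdiff.mpr ⟨Finset.mem_union_right _ hxγ,
        fun hmem => hxβ (Finset.mem_inter.mp hmem).1⟩) ⟨hx1, lt_of_le_of_lt hx2 h1⟩
    · rintro ⟨hxβ, hx1, hx2⟩
      refine ⟨?_, hx1, hx2⟩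
      by_contra hxγ
      exact hbet x (Finset.mem_sdiff.mpr ⟨Finset.mem_union_left _ hxβ,
        fun hmem => hxγ (Finset.mem_inter.mp hmem).2⟩) ⟨hx1, lt_of_le_of_lt hx2 h1⟩
  have hG : γ.filter (· ≤ z) = γ.filter (· ≤ z - 1) := by
    ext x
    simp only [Finset.mem_filter]
    constructor
    · rintro ⟨hxγ, hxle⟩
      refine ⟨hxγ, ?_⟩
      rcases eq_or_lt_of_le hxle with rfl | hlt
      · exact absurd hxγ hzγ
      · omega
    · rintro ⟨hxγ, hxle⟩
      exact ⟨hxγ, by omega⟩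
  have hF : β.filter (· ≤ z) = insert z (β.filter (· ≤ z - 1)) := by
    ext x
    simp only [Finset.mem_filter, Finset.mem_insert]
    constructor
    · rintro ⟨hxβ, hxle⟩
      rcases eq_or_lt_of_le hxle with rfl | hlt
      · exact Or.inl rfl
      · exact Or.inr ⟨hxβ, by omega⟩
    · rintro (rfl | ⟨hxβ, hxle⟩)
      · exact ⟨hzβ, le_refl _⟩
      · exact ⟨hxβ, by omega⟩
  have hFc : (β.filter (· ≤ z)).card = (β.filter (· ≤ z - 1)).card + 1 := by
    rw [hF, Finset.card_insert_of_notMem]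
    intro hmem
    have := (Finset.mem_filter.mp hmem).2
    omega
  rw [hA, hG, hFc]
  omega

/-- remark (R): if `z ∈ β`, `z' ∈ γ` and either `z = z'`, or `z < z'`
with `z ∉ γ`, `z' ∉ β` and `z, z'` consecutive in `Z(S)`, then `S' = (β∖{z}, γ∖{z'})`
is a symbol in `Sy(n,k-1,r)` and `S` is standard iff `S'` is standard. -/
theorem statement10 (n k r : ℕ) (hn : 2 ≤ n) (hk : 2 ≤ k) (hkr : k + r ≤ n)
    (β γ : Finset ℤ) (hS : IsSymbol n k r β γ)
    (z z' : ℤ) (hz : z ∈ β) (hz' : z' ∈ γ)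
    (hcase : z = z' ∨
      (z < z' ∧ z ∉ γ ∧ z' ∉ β ∧
        ∀ x ∈ (β ∪ γ) \ (β ∩ γ), ¬(z < x ∧ x < z'))) :
    IsSymbol n (k - 1) r (β.erase z) (γ.erase z') ∧
    (IsStandard β γ ↔ IsStandard (β.erase z) (γ.erase z')) := by
  obtain ⟨hβsub, hγsub, hβcard, hγcard⟩ := hS
  have hzz' : z ≤ z' := by rcases hcase with rfl | ⟨h, _⟩; exacts [le_refl _, le_of_lt h]
  have hβe : (β.erase z).card = (k - 1) + r := by rw [Finset.card_erase_of_mem hz]; omega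
  have hγe : (γ.erase z').card = k - 1 := by rw [Finset.card_erase_of_mem hz']; omega
  have hc1 : γ.card ≤ β.card := by omega
  have hc2 : (γ.erase z').card ≤ (β.erase z).card := by omega
  refine ⟨⟨fun x hx => hβsub (Finset.mem_of_mem_erase hx),
          fun x hx => hγsub (Finset.mem_of_mem_erase hx), hβe, hγe⟩, ?_⟩
  rw [standard_iff β γ hc1, standard_iff _ _ hc2]
  constructor
  · intro h t
    rcases le_or_gt z' t with h1 | h1
    · have h2 : z ≤ t := le_trans hzz' h1
      have e1 := erase_filter_card_le γ z' hz' t h1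
      have e2 := erase_filter_card_le β z hz t h2
      have := h t
      omega
    · rcases le_or_gt z t with h2 | h2
      · rcases hcase with rfl | ⟨hlt, hzγ, hz'β, hbet⟩
        · omega
        · have e1 := erase_filter_card_gt γ z' t (by omega)
          have e2 := erase_filter_card_le β z hz t h2
          have key := middle_lt β γ z z' t hz hzγ hz'β hbet (h (z - 1)) h2 h1
          omega
      · have e1 := erase_filter_card_gt γ z' t (by omega)
        have e2 := erase_filter_card_gt β z t (by omega)
        have := h t
        omega
  · intro h t
    rcases le_or_gt z' t with h1 | h1
    · have h2 : z ≤ t := le_trans hzz' h1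
      have e1 := erase_filter_card_le γ z' hz' t h1
      have e2 := erase_filter_card_le β z hz t h2
      have := h t
      omega
    · have e1 := erase_filter_card_gt γ z' t (by omega)
      have := h t
      rcases le_or_gt z t with h2 | h2
      · have e2 := erase_filter_card_le β z hz t h2
        omega
      · have e2 := erase_filter_card_gt β z t (by omega)
        omega

end LM2003
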